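/- Let a > 0, let k be a positive integer, and let X be a random variable with the Gamma distribution with shape parameter a and rate 1, i.e., with density x^{a−1}·e^{−x}/Γ(a) on (0,∞). Then ∑_{j=1}^{2k−1} ( 1/j + b_{k,j} · Γ(a+j) / (Γ(a)·a^j) ) ≤ log(E[X]) − E[log(X)], and if moreover a > 2k−1 then log(E[X]) − E[log(X)] ≤ −∑_{j=1}^{2k−1} ( 1/j + b_{k,j} · Γ(a−j)·a^j / Γ(a) ). -/

import Mathlib

open MeasureTheory ProbabilityTheory Finset
open scoped ENNReal NNReal

open Finset

lemma alt_choose_harmonic (n : ℕ) :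
    ∑ j ∈ Icc 1 n, ((-1:ℝ)^j * (n.choose j)) / j = -∑ j ∈ Icc 1 n, (1:ℝ)/j := by
  induction n with
  | zero => simp
  | succ n ih =>
    have pascal : ∀ j ∈ Icc 1 (n+1), ((-1:ℝ)^j * ((n+1).choose j)) / j
        = ((-1:ℝ)^j * (n.choose j)) / j + ((-1:ℝ)^j * (n.choose (j-1))) / j := by
      intro j hj
      simp only [mem_Icc] at hj
      obtain ⟨j, rfl⟩ := Nat.exists_eq_add_of_le hj.1
      rw [Nat.add_comm 1 j, Nat.choose_succ_succ, Nat.cast_add, Nat.add_sub_cancel]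
      ring
    have key2 : ∀ j ∈ Icc 1 (n+1), ((-1:ℝ)^j * (n.choose (j-1))) / j
        = ((-1:ℝ)^j * ((n+1).choose j)) / (n+1) := by
      intro j hj
      simp only [mem_Icc] at hj
      obtain ⟨j, rfl⟩ := Nat.exists_eq_add_of_le hj.1
      rw [Nat.add_comm 1 j, Nat.add_sub_cancel]
      have h := Nat.add_one_mul_choose_eq n j
      have h' : ((n:ℝ)+1) * (n.choose j) = ((n+1).choose (j+1)) * (j+1) := by
        exact_mod_cast congrArg (Nat.cast : ℕ → ℝ) h
      rw [mul_div_assoc, mul_div_assoc]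
      congr 1
      rw [div_eq_div_iff (by positivity) (by positivity)]
      push_cast
      linarith [h']
    rw [sum_congr rfl pascal, sum_add_distrib, sum_congr rfl key2]
    have hfirst : ∑ j ∈ Icc 1 (n+1), ((-1:ℝ)^j * (n.choose j)) / j
        = ∑ j ∈ Icc 1 n, ((-1:ℝ)^j * (n.choose j)) / j := by
      rw [Finset.sum_Icc_succ_top (by omega)]
      simp [Nat.choose_succ_self]
    have halt : ∑ j ∈ Icc 1 (n+1), ((-1:ℝ)^j * ((n+1).choose j)) = -1 := by
      have h := Int.alternating_sum_range_choose_of_ne (n := n+1) (by omega)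
      have h' : ∑ j ∈ range (n+2), ((-1:ℝ)^j * ((n+1).choose j)) = 0 := by
        exact_mod_cast congrArg (Int.cast : ℤ → ℝ) h
      have := Finset.sum_range_succ' (fun j => ((-1:ℝ)^j * ((n+1).choose j))) (n+1)
      rw [this] at h'
      simp only [pow_zero, one_mul, Nat.choose_zero_right, Nat.cast_one] at h'
      have heq : ∑ j ∈ Icc 1 (n+1), ((-1:ℝ)^j * ((n+1).choose j))
          = ∑ i ∈ range (n+1), ((-1:ℝ)^(i+1) * ((n+1).choose (i+1))) := by
        rw [← Finset.Ico_add_one_right_eq_Icc, Finset.sum_Ico_eq_sum_range]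
        simp [Nat.add_comm]
      rw [heq]
      linarith
    have hsecond : ∑ j ∈ Icc 1 (n+1), ((-1:ℝ)^j * ((n+1).choose j)) / (n+1)
        = -1/(n+1) := by
      rw [← Finset.sum_div, halt]
    rw [hfirst, hsecond, ih, Finset.sum_Icc_succ_top (by omega : 1 ≤ n+1)]
    push_cast
    ring


lemma expand_pow (n : ℕ) (y : ℝ) :
    (1 - y)^n = 1 + ∑ j ∈ Icc 1 n, ((-1:ℝ)^j * (n.choose j)) * y^j := by
  have h : (1 - y)^n = (-y + 1)^n := by ring_nf
  rw [h, add_pow]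
  rw [Finset.sum_range_succ' (fun k => (-y)^k * 1^(n-k) * (n.choose k)) n]
  have : ∑ j ∈ Icc 1 n, ((-1:ℝ)^j * (n.choose j)) * y^j
      = ∑ i ∈ range n, (-y)^(i+1) * 1^(n-(i+1)) * (n.choose (i+1)) := by
    rw [← Finset.Ico_add_one_right_eq_Icc, Finset.sum_Ico_eq_sum_range]
    simp only [Nat.add_sub_cancel, one_pow, mul_one]
    refine Finset.sum_congr rfl fun i _ => ?_
    rw [Nat.add_comm 1 i, neg_pow]
    ring
  rw [this]
  simp [add_comm]

lemma key_log_ineq {n : ℕ} (hn : Odd n) {y : ℝ} (hy : 0 < y) :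
    Real.log y + ∑ j ∈ Icc 1 n, ((-1:ℝ)^j / j) * (n.choose j) * y^j
      ≤ ∑ j ∈ Icc 1 n, ((-1:ℝ)^j * (n.choose j)) / j := by
  set c : ℕ → ℝ := fun j => ((-1:ℝ)^j / j) * (n.choose j) with hc
  set g : ℝ → ℝ := fun y => Real.log y + ∑ j ∈ Icc 1 n, c j * y^j with hgdef
  have hg : ∀ y : ℝ, 0 < y → HasDerivAt g ((1-y)^n / y) y := by
    intro y hy
    have hsum : HasDerivAt (fun y : ℝ => ∑ j ∈ Icc 1 n, c j * y^j)
        (∑ j ∈ Icc 1 n, c j * (j * y^(j-1))) y :=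
      HasDerivAt.fun_sum (fun j _ => (hasDerivAt_pow j y).const_mul (c j))
    have h1 := (Real.hasDerivAt_log hy.ne').add hsum
    refine h1.congr_deriv ?_
    have hterm : ∀ j ∈ Icc 1 n, c j * ((j:ℝ) * y^(j-1)) = ((-1:ℝ)^j * (n.choose j)) * y^(j-1) := by
      intro j hj
      simp only [mem_Icc] at hj
      have hj0 : (j:ℝ) ≠ 0 := Nat.cast_ne_zero.mpr (by omega)
      simp only [hc]
      field_simp
    rw [sum_congr rfl hterm]
    have : ∀ j ∈ Icc 1 n, ((-1:ℝ)^j * (n.choose j)) * y^(j-1)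
        = (((-1:ℝ)^j * (n.choose j)) * y^j) / y := by
      intro j hj
      simp only [mem_Icc] at hj
      obtain ⟨i, rfl⟩ := Nat.exists_eq_add_of_le hj.1
      rw [Nat.add_comm 1 i, Nat.add_sub_cancel, pow_succ]
      field_simp
      ring
    rw [sum_congr rfl this, ← Finset.sum_div, expand_pow, add_div, one_div]
  have hmono : MonotoneOn g (Set.Ioc 0 1) := by
    apply monotoneOn_of_deriv_nonneg (convex_Ioc 0 1)
    · intro x hx
      exact ((hg x hx.1).continuousAt).continuousWithinAt
    · intro x hx
      rw [interior_Ioc] at hx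
      exact (hg x hx.1).differentiableAt.differentiableWithinAt
    · intro x hx
      rw [interior_Ioc] at hx
      rw [(hg x hx.1).deriv]
      exact div_nonneg (pow_nonneg (by linarith [hx.2]) n) hx.1.le
  have hanti : AntitoneOn g (Set.Ici 1) := by
    apply antitoneOn_of_deriv_nonpos (convex_Ici 1)
    · intro x hx
      exact ((hg x (lt_of_lt_of_le one_pos hx)).continuousAt).continuousWithinAt
    · intro x hx
      rw [interior_Ici] at hx
      exact (hg x (lt_trans one_pos hx)).differentiableAt.differentiableWithinAt
    · intro x hx
      rw [interior_Ici] at hx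
      rw [(hg x (lt_trans one_pos hx)).deriv]
      have hx1 : (1:ℝ) < x := hx
      apply div_nonpos_of_nonpos_of_nonneg _ (by linarith)
      exact Odd.pow_nonpos hn (by linarith)
  have hg1 : g y ≤ g 1 := by
    rcases le_total y 1 with h | h
    · exact hmono ⟨hy, h⟩ ⟨one_pos, le_refl 1⟩ h
    · exact hanti (Set.mem_Ici.mpr (le_refl 1)) (Set.mem_Ici.mpr h) h
  have hg1val : g 1 = ∑ j ∈ Icc 1 n, ((-1:ℝ)^j * (n.choose j)) / j := by
    simp only [hgdef, hc, Real.log_one, one_pow, mul_one, zero_add]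
    refine Finset.sum_congr rfl fun j _ => ?_
    ring
  calc Real.log y + ∑ j ∈ Icc 1 n, ((-1:ℝ)^j / j) * (n.choose j) * y^j = g y := rfl
    _ ≤ g 1 := hg1
    _ = _ := hg1val


lemma gammaPDF_eq_nnreal (a : ℝ) :
    gammaPDF a 1 = fun x => ((Real.toNNReal (gammaPDFReal a 1 x) : ℝ≥0) : ℝ≥0∞) := rfl

lemma gamma_ae_eq (a : ℝ) (f : ℝ → ℝ) :
    (fun x => gammaPDFReal a 1 x * f x)
      =ᵐ[volume] (Set.Ioi (0:ℝ)).indicator (fun x => gammaPDFReal a 1 x * f x) := by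
  have hsub : {x : ℝ | ¬ (gammaPDFReal a 1 x * f x
      = (Set.Ioi (0:ℝ)).indicator (fun x => gammaPDFReal a 1 x * f x) x)} ⊆ {0} := by
    intro x hx
    simp only [Set.mem_setOf_eq] at hx
    by_contra hx0
    rcases lt_trichotomy x 0 with h | h | h
    · apply hx
      rw [Set.indicator_of_notMem (by simp [h.not_gt] : x ∉ Set.Ioi (0:ℝ))]
      simp [gammaPDFReal, not_le.mpr h]
    · exact hx0 (by simp [h])
    · exact hx (by rw [Set.indicator_of_mem (Set.mem_Ioi.mpr h)])
  exact ae_iff.mpr (measure_mono_null hsub (measure_singleton 0))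

lemma gamma_integral_eq {a : ℝ} (ha : 0 < a) (f : ℝ → ℝ) :
    ∫ x, f x ∂(gammaMeasure a 1) = ∫ x in Set.Ioi (0:ℝ), gammaPDFReal a 1 x * f x := by
  rw [gammaMeasure, gammaPDF_eq_nnreal,
    integral_withDensity_eq_integral_smul (measurable_gammaPDFReal a 1).real_toNNReal f]
  have h1 : (fun x => (Real.toNNReal (gammaPDFReal a 1 x)) • f x)
      = fun x => gammaPDFReal a 1 x * f x := by
    funext x
    simp [NNReal.smul_def, Real.coe_toNNReal _ (gammaPDFReal_nonneg ha one_pos x)]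
  rw [h1, integral_congr_ae (gamma_ae_eq a f), integral_indicator measurableSet_Ioi]

lemma gamma_integrable_iff {a : ℝ} (ha : 0 < a) (f : ℝ → ℝ) :
    Integrable f (gammaMeasure a 1)
      ↔ IntegrableOn (fun x => gammaPDFReal a 1 x * f x) (Set.Ioi 0) volume := by
  rw [gammaMeasure, gammaPDF_eq_nnreal,
    integrable_withDensity_iff_integrable_smul (measurable_gammaPDFReal a 1).real_toNNReal]
  have h1 : (fun x => (Real.toNNReal (gammaPDFReal a 1 x)) • f x)
      = fun x => gammaPDFReal a 1 x * f x := by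
    funext x
    simp [NNReal.smul_def, Real.coe_toNNReal _ (gammaPDFReal_nonneg ha one_pos x)]
  rw [h1, integrable_congr (gamma_ae_eq a f), integrable_indicator_iff measurableSet_Ioi]

lemma gamma_rpow {a : ℝ} (ha : 0 < a) {p : ℝ} (hp : 0 < a + p) :
    IntegrableOn (fun x => gammaPDFReal a 1 x * x ^ p) (Set.Ioi 0) volume ∧
    ∫ x in Set.Ioi (0:ℝ), gammaPDFReal a 1 x * x ^ p = Real.Gamma (a+p) / Real.Gamma a := by
  have hEq : Set.EqOn (fun x => gammaPDFReal a 1 x * x ^ p)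
      (fun x => (Real.Gamma a)⁻¹ * (Real.exp (-x) * x ^ (a + p - 1))) (Set.Ioi 0) := by
    intro x hx
    have hx0 : (0:ℝ) < x := hx
    simp only [gammaPDFReal, if_pos hx0.le, Real.one_rpow, one_mul]
    rw [show a + p - 1 = (a-1) + p by ring, Real.rpow_add hx0]
    ring
  have hInt : IntegrableOn (fun x => (Real.Gamma a)⁻¹ * (Real.exp (-x) * x ^ (a+p-1)))
      (Set.Ioi 0) volume := (Real.GammaIntegral_convergent hp).const_mul _
  constructor
  · exact hInt.congr_fun hEq.symm measurableSet_Ioi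
  · rw [setIntegral_congr_fun measurableSet_Ioi hEq, integral_const_mul,
      ← Real.Gamma_eq_integral hp]
    rw [inv_mul_eq_div]

lemma gamma_moment_nat {a : ℝ} (ha : 0 < a) (j : ℕ) :
    Integrable (fun x : ℝ => x ^ j) (gammaMeasure a 1) ∧
    ∫ x, x ^ j ∂(gammaMeasure a 1) = Real.Gamma (a + j) / Real.Gamma a := by
  have hp : 0 < a + (j:ℝ) := by positivity
  have hEq : Set.EqOn (fun x : ℝ => gammaPDFReal a 1 x * x ^ ((j:ℕ):ℝ))
      (fun x => gammaPDFReal a 1 x * x ^ j) (Set.Ioi 0) := by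
    intro x _
    show gammaPDFReal a 1 x * x ^ ((j:ℕ):ℝ) = gammaPDFReal a 1 x * x ^ j
    rw [Real.rpow_natCast]
  constructor
  · rw [gamma_integrable_iff ha]
    exact ((gamma_rpow ha hp).1).congr_fun hEq measurableSet_Ioi
  · rw [gamma_integral_eq ha, ← setIntegral_congr_fun measurableSet_Ioi hEq,
      (gamma_rpow ha hp).2]

lemma gamma_moment_inv {a : ℝ} (ha : 0 < a) {j : ℕ} (hj : (j:ℝ) < a) :
    Integrable (fun x : ℝ => (x⁻¹) ^ j) (gammaMeasure a 1) ∧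
    ∫ x, (x⁻¹) ^ j ∂(gammaMeasure a 1) = Real.Gamma (a - j) / Real.Gamma a := by
  have hp : 0 < a + (-(j:ℝ)) := by linarith
  have hEq : Set.EqOn (fun x : ℝ => gammaPDFReal a 1 x * x ^ (-(j:ℝ)))
      (fun x => gammaPDFReal a 1 x * (x⁻¹) ^ j) (Set.Ioi 0) := by
    intro x hx
    have hx0 : (0:ℝ) < x := hx
    show gammaPDFReal a 1 x * x ^ (-(j:ℝ)) = gammaPDFReal a 1 x * (x⁻¹) ^ j
    rw [Real.rpow_neg hx0.le, Real.rpow_natCast, inv_pow]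
  have haj : a + (-(j:ℝ)) = a - j := by ring
  constructor
  · rw [gamma_integrable_iff ha]
    exact ((gamma_rpow ha hp).1).congr_fun hEq measurableSet_Ioi
  · rw [gamma_integral_eq ha, ← setIntegral_congr_fun measurableSet_Ioi hEq,
      (gamma_rpow ha hp).2, haj]

lemma abs_log_le_aux {a x : ℝ} (ha : 0 < a) (hx : 0 < x) :
    |Real.log x| ≤ x ^ ((1:ℕ):ℝ) + (2/a) * x ^ (-(a/2)) := by
  have h2 : (0:ℝ) < x ^ (-(a/2)) := Real.rpow_pos_of_pos hx _
  have h1 : x ^ ((1:ℕ):ℝ) = x := by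
    rw [Real.rpow_natCast, pow_one]
  rw [h1]
  rcases le_or_gt 1 x with h | h
  · rw [abs_of_nonneg (Real.log_nonneg h)]
    have := Real.log_le_sub_one_of_pos hx
    nlinarith [div_pos two_pos ha]
  · rw [abs_of_nonpos (Real.log_nonpos hx.le h.le)]
    have hlog : Real.log (x ^ (-(a/2))) = (-(a/2)) * Real.log x := Real.log_rpow hx _
    have hle : Real.log (x ^ (-(a/2))) ≤ x ^ (-(a/2)) - 1 := Real.log_le_sub_one_of_pos h2
    rw [hlog] at hle
    have key : -Real.log x ≤ (2/a) * x ^ (-(a/2)) := by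
      have h3 : (-(a/2)) * Real.log x ≤ x ^ (-(a/2)) := by linarith
      have h4 : -Real.log x = (2/a) * ((-(a/2)) * Real.log x) := by
        field_simp
      rw [h4]
      have : (0:ℝ) < 2/a := by positivity
      exact mul_le_mul_of_nonneg_left h3 this.le
    linarith

lemma gamma_log_integrable {a : ℝ} (ha : 0 < a) :
    Integrable Real.log (gammaMeasure a 1) := by
  rw [gamma_integrable_iff ha]
  have hbound : IntegrableOn
      (fun x => gammaPDFReal a 1 x * x ^ ((1:ℕ):ℝ)
        + (2/a) * (gammaPDFReal a 1 x * x ^ (-(a/2)))) (Set.Ioi 0) volume := by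
    refine ((gamma_rpow ha (by positivity : (0:ℝ) < a + ((1:ℕ):ℝ))).1).add ?_
    exact ((gamma_rpow ha (by linarith : (0:ℝ) < a + (-(a/2)))).1).const_mul _
  refine hbound.integrable.mono' ?_ ?_
  · exact (((measurable_gammaPDFReal a 1).mul Real.measurable_log).aestronglyMeasurable).restrict
  · rw [ae_restrict_iff' measurableSet_Ioi]
    refine Filter.Eventually.of_forall fun x hx => ?_
    have hx0 : (0:ℝ) < x := hx
    have hpdf : 0 ≤ gammaPDFReal a 1 x := gammaPDFReal_nonneg ha one_pos x
    rw [norm_mul, Real.norm_of_nonneg hpdf]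
    calc gammaPDFReal a 1 x * ‖Real.log x‖
        ≤ gammaPDFReal a 1 x * (x ^ ((1:ℕ):ℝ) + (2/a) * x ^ (-(a/2))) := by
          exact mul_le_mul_of_nonneg_left (abs_log_le_aux ha hx0) hpdf
      _ = gammaPDFReal a 1 x * x ^ ((1:ℕ):ℝ) + (2/a) * (gammaPDFReal a 1 x * x ^ (-(a/2))) := by
          ring

lemma gamma_ae_pos {a : ℝ} (ha : 0 < a) :
    ∀ᵐ x ∂(gammaMeasure a 1), 0 < x := by
  rw [ae_iff]
  have hset : {x : ℝ | ¬ 0 < x} = Set.Iic 0 := by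
    ext x; simp
  rw [hset]
  have h1 : gammaMeasure a 1 (Set.Iio 0) = 0 := by
    rw [gammaMeasure, withDensity_apply _ measurableSet_Iio]
    exact lintegral_gammaPDF_of_nonpos le_rfl
  have h2 : gammaMeasure a 1 {(0:ℝ)} = 0 := by
    rw [gammaMeasure, withDensity_apply _ (measurableSet_singleton 0)]
    exact setLIntegral_measure_zero _ _ (measure_singleton 0)
  refine measure_mono_null (fun x hx => ?_) (measure_union_null h1 h2)
  rcases lt_or_eq_of_le (Set.mem_Iic.mp hx) with h | h
  · exact Or.inl h
  · exact Or.inr (by simp [h])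

/-- Let `a > 0`, let `k ≥ 1`, and let `X` be a random variable with the
Gamma distribution with shape `a` and rate `1`. Then, with `b_{k,j} = ((−1)^j/j)·C(2k−1,j)`,
`∑_{j=1}^{2k−1} (1/j + b_{k,j}·Γ(a+j)/(Γ(a)·a^j)) ≤ log(E[X]) − E[log(X)]`, and if moreover
`a > 2k−1` then `log(E[X]) − E[log(X)] ≤ −∑_{j=1}^{2k−1} (1/j + b_{k,j}·Γ(a−j)·a^j/Γ(a))`. -/
theorem jensen_gap_log_gamma_distribution
    {Ω : Type*} [MeasurableSpace Ω] (P : Measure Ω) [IsProbabilityMeasure P]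
    (a : ℝ) (ha : 0 < a) (k : ℕ) (hk : 0 < k)
    (X : Ω → ℝ) (hX : Measurable X)
    (hmap : P.map X = gammaMeasure a 1) :
    (∑ j ∈ Finset.Icc 1 (2 * k - 1),
        (1 / (j : ℝ) + ((-1 : ℝ) ^ j / (j : ℝ)) * ((2 * k - 1).choose j : ℝ) *
          (Real.Gamma (a + j) / (Real.Gamma a * a ^ (j : ℕ))))
      ≤ Real.log (∫ ω, X ω ∂P) - ∫ ω, Real.log (X ω) ∂P) ∧
    (((2 * k - 1 : ℕ) : ℝ) < a →
      Real.log (∫ ω, X ω ∂P) - ∫ ω, Real.log (X ω) ∂P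
        ≤ -∑ j ∈ Finset.Icc 1 (2 * k - 1),
            (1 / (j : ℝ) + ((-1 : ℝ) ^ j / (j : ℝ)) * ((2 * k - 1).choose j : ℝ) *
              (Real.Gamma (a - j) * a ^ (j : ℕ) / Real.Gamma a))) := by
  set n : ℕ := 2 * k - 1 with hn_def
  have hn : Odd n := ⟨k - 1, by omega⟩
  set ν : Measure ℝ := gammaMeasure a 1 with hν_def
  haveI : IsProbabilityMeasure ν := isProbabilityMeasure_gammaMeasure ha one_pos
  have hGa : Real.Gamma a ≠ 0 := (Real.Gamma_pos_of_pos ha).ne'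
  have hmean : ∫ x, x ∂ν = a := by
    have h := (gamma_moment_nat ha 1).2
    simp only [pow_one] at h
    rw [hν_def, h, show a + ((1:ℕ):ℝ) = a + 1 by norm_num, Real.Gamma_add_one ha.ne',
      mul_div_cancel_right₀ _ hGa]
  have hEX : ∫ ω, X ω ∂P = a := by
    rw [← hmean, ← hmap,
      integral_map (f := fun x : ℝ => x) hX.aemeasurable measurable_id.aestronglyMeasurable]
  have hElog : ∫ ω, Real.log (X ω) ∂P = ∫ x, Real.log x ∂ν := by
    rw [← hmap,
      integral_map hX.aemeasurable Real.measurable_log.aestronglyMeasurable]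
  set c : ℕ → ℝ := fun j => (-1:ℝ)^j / j * ((n.choose j : ℕ) : ℝ) with hc_def
  have hlogν : Integrable Real.log ν := gamma_log_integrable ha
  rw [hEX, hElog]
  constructor
  · -- lower bound
    have hint_j : ∀ j ∈ Finset.Icc 1 n,
        Integrable (fun x : ℝ => 1/(j:ℝ) + (c j / a^j) * x^j) ν :=
      fun j _ => (integrable_const _).add ((gamma_moment_nat ha j).1.const_mul _)
    have hval_j : ∀ j ∈ Finset.Icc 1 n,
        ∫ x, (1/(j:ℝ) + (c j / a^j) * x^j) ∂ν
          = 1/(j:ℝ) + (c j / a^j) * (Real.Gamma (a + j) / Real.Gamma a) := by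
      intro j _
      rw [integral_add (integrable_const _) ((gamma_moment_nat ha j).1.const_mul _),
        integral_const, integral_const_mul, (gamma_moment_nat ha j).2]
      simp
    set F : ℝ → ℝ := fun x => ∑ j ∈ Finset.Icc 1 n, (1/(j:ℝ) + (c j / a^j) * x^j)
      with hF_def
    have hFint : Integrable F ν := integrable_finset_sum _ hint_j
    have hpoint : ∀ x : ℝ, 0 < x → F x ≤ Real.log a - Real.log x := by
      intro x hx
      have hkey := key_log_ineq hn (div_pos hx ha)
      rw [alt_choose_harmonic n] at hkey
      have hlogdiv : Real.log (x/a) = Real.log x - Real.log a := Real.log_div hx.ne' ha.ne'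
      have hsum_eq : ∑ j ∈ Finset.Icc 1 n, ((-1:ℝ)^j / j) * (n.choose j) * (x/a)^j
          = ∑ j ∈ Finset.Icc 1 n, (c j / a^j) * x^j := by
        refine Finset.sum_congr rfl fun j _ => ?_
        rw [div_pow, hc_def]
        ring
      rw [hlogdiv, hsum_eq] at hkey
      rw [hF_def]
      simp only [Finset.sum_add_distrib]
      linarith
    have hmono : ∫ x, F x ∂ν ≤ ∫ x, (Real.log a - Real.log x) ∂ν := by
      refine integral_mono_ae hFint ((integrable_const _).sub hlogν) ?_
      exact (gamma_ae_pos ha).mono fun x hx => hpoint x hx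
    have hFval : ∫ x, F x ∂ν
        = ∑ j ∈ Finset.Icc 1 n, (1/(j:ℝ) + (c j / a^j) * (Real.Gamma (a + j) / Real.Gamma a)) := by
      rw [hF_def, integral_finset_sum _ hint_j]
      exact Finset.sum_congr rfl hval_j
    have hRHS : ∫ x, (Real.log a - Real.log x) ∂ν = Real.log a - ∫ x, Real.log x ∂ν := by
      rw [integral_sub (integrable_const _) hlogν, integral_const]
      simp
    rw [hFval, hRHS] at hmono
    refine le_trans (le_of_eq ?_) hmono
    refine Finset.sum_congr rfl fun j _ => ?_
    rw [hc_def]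
    rw [div_mul_div_comm, mul_comm (a^j) (Real.Gamma a), ← mul_div_assoc]
  · -- upper bound
    intro hcast
    have hjlt : ∀ j ∈ Finset.Icc 1 n, (j:ℝ) < a := fun j hj =>
      lt_of_le_of_lt (Nat.cast_le.mpr (Finset.mem_Icc.mp hj).2) hcast
    have hint_j : ∀ j ∈ Finset.Icc 1 n,
        Integrable (fun x : ℝ => 1/(j:ℝ) + (c j * a^j) * (x⁻¹)^j) ν :=
      fun j hj => (integrable_const _).add ((gamma_moment_inv ha (hjlt j hj)).1.const_mul _)
    have hval_j : ∀ j ∈ Finset.Icc 1 n,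
        ∫ x, (1/(j:ℝ) + (c j * a^j) * (x⁻¹)^j) ∂ν
          = 1/(j:ℝ) + (c j * a^j) * (Real.Gamma (a - j) / Real.Gamma a) := by
      intro j hj
      rw [integral_add (integrable_const _) ((gamma_moment_inv ha (hjlt j hj)).1.const_mul _),
        integral_const, integral_const_mul, (gamma_moment_inv ha (hjlt j hj)).2]
      simp
    set G : ℝ → ℝ := fun x => -∑ j ∈ Finset.Icc 1 n, (1/(j:ℝ) + (c j * a^j) * (x⁻¹)^j)
      with hG_def
    have hGint : Integrable G ν := (integrable_finset_sum _ hint_j).neg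
    have hpoint : ∀ x : ℝ, 0 < x → Real.log a - Real.log x ≤ G x := by
      intro x hx
      have hkey := key_log_ineq hn (div_pos ha hx)
      rw [alt_choose_harmonic n] at hkey
      have hlogdiv : Real.log (a/x) = Real.log a - Real.log x := Real.log_div ha.ne' hx.ne'
      have hsum_eq : ∑ j ∈ Finset.Icc 1 n, ((-1:ℝ)^j / j) * (n.choose j) * (a/x)^j
          = ∑ j ∈ Finset.Icc 1 n, (c j * a^j) * (x⁻¹)^j := by
        refine Finset.sum_congr rfl fun j _ => ?_
        rw [div_pow, inv_pow, hc_def]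
        ring
      rw [hlogdiv, hsum_eq] at hkey
      rw [hG_def]
      simp only [Finset.sum_add_distrib]
      linarith
    have hmono : ∫ x, (Real.log a - Real.log x) ∂ν ≤ ∫ x, G x ∂ν := by
      refine integral_mono_ae ((integrable_const _).sub hlogν) hGint ?_
      exact (gamma_ae_pos ha).mono fun x hx => hpoint x hx
    have hGval : ∫ x, G x ∂ν
        = -∑ j ∈ Finset.Icc 1 n,
            (1/(j:ℝ) + (c j * a^j) * (Real.Gamma (a - j) / Real.Gamma a)) := by
      rw [hG_def, integral_neg, integral_finset_sum _ hint_j]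
      rw [Finset.sum_congr rfl hval_j]
    have hLHS : ∫ x, (Real.log a - Real.log x) ∂ν = Real.log a - ∫ x, Real.log x ∂ν := by
      rw [integral_sub (integrable_const _) hlogν, integral_const]
      simp
    rw [hGval, hLHS] at hmono
    refine le_trans hmono (le_of_eq ?_)
    rw [neg_inj]
    refine Finset.sum_congr rfl fun j _ => ?_
    rw [hc_def]
    ring
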